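/- Let (A,m) be a Noetherian local ring, I an m-primary ideal, J_1,...,J_s ideals, and let x ∈ J_1 be such that its image x* in the Z^{s+1}-graded algebra S = ⊕_u I^{u_0}J_1^{u_1}···J_s^{u_s}/I^{u_0+1}J_1^{u_1+1}···J_s^{u_s+1} satisfies (0 : x*)_u = 0 for u ≫ 0. Then for u ≫ 0, I^{u_0}J_1^{u_1}···J_s^{u_s} ∩ (x) = x · I^{u_0}J_1^{u_1−1}J_2^{u_2}···J_s^{u_s}. -/

import Mathlib

open IsLocalRing

/-- The length of a module, as the Krull dimension (height) of its submodule lattice. -/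
noncomputable def modLength (A M : Type*) [CommRing A] [AddCommGroup M] [Module A M] : ℕ :=
  (WithBot.unbotD 0 (Order.krullDim (Submodule A M))).toNat

/-- Length of the subquotient `p/q` of the ring `A` (for `q ≤ p`). -/
noncomputable def subquotLength (A : Type*) [CommRing A] (p q : Ideal A) : ℕ :=
  modLength A (↥p ⧸ (Submodule.comap p.subtype q))

/-- The multigraded Hilbert function of `R(I | J_1,...,J_s)`:
`u ↦ ℓ(I^{u_0}J_1^{u_1}...J_s^{u_s} / I^{u_0+1}J_1^{u_1}...J_s^{u_s})`. -/
noncomputable def mixedHF {A : Type*} [CommRing A] (I : Ideal A) {s : ℕ} (J : Fin s → Ideal A)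
    (u : Fin (s + 1) → ℕ) : ℕ :=
  subquotLength A (I ^ (u 0) * ∏ i, J i ^ (u i.succ))
    (I ^ (u 0 + 1) * ∏ i, J i ^ (u i.succ))

/-- A multivariate polynomial `P` agrees with `H` for all sufficiently large arguments. -/
def AgreesEventually {σ : Type*} (P : MvPolynomial σ ℚ) (H : (σ → ℕ) → ℕ) : Prop :=
  ∃ N : ℕ, ∀ u : σ → ℕ, (∀ i, N ≤ u i) → MvPolynomial.eval (fun i => (u i : ℚ)) P = H u

/-- A one-variable polynomial `p` agrees with `H : ℕ → ℕ` for large arguments. -/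
def AgreesEventually1 (p : Polynomial ℚ) (H : ℕ → ℕ) : Prop :=
  ∃ N : ℕ, ∀ n : ℕ, N ≤ n → Polynomial.eval (n : ℚ) p = H n

/-- The mixed multiplicity `e_α = α! ⬝ (coefficient of u^α)` read off from a Hilbert polynomial. -/
noncomputable def mixedMult {s : ℕ} (P : MvPolynomial (Fin s) ℚ) (α : Fin s → ℕ) : ℚ :=
  (∏ i, ((α i).factorial : ℚ)) * MvPolynomial.coeff (Finsupp.equivFunOnFinite.symm α) P

/-- The saturation `Q : J^∞ = ⋃ₘ (Q : J^m)`. -/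
noncomputable def Ideal.sat {A : Type*} [CommRing A] (Q J : Ideal A) : Ideal A :=
  ⨆ m : ℕ, Q.colon ((J ^ m : Ideal A) : Set A)

/-- The Hilbert-Samuel function of the module `A/Q` with respect to `I`:
`n ↦ ℓ(A/(Q + I^{n+1}))`. -/
noncomputable def samuelHF {A : Type*} [CommRing A] (I Q : Ideal A) (n : ℕ) : ℕ :=
  modLength A (A ⧸ (Q ⊔ I ^ (n + 1)))

/-- The Samuel multiplicity read off from a Hilbert-Samuel polynomial: `(deg p)! ⬝ lc(p)`. -/
noncomputable def multFromPoly (p : Polynomial ℚ) : ℚ :=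
  (p.natDegree.factorial : ℚ) * p.leadingCoeff

/-- An ideal of a local ring is `m`-primary iff it contains a power of `m`
and is contained in `m`. -/
def IsMPrimary {A : Type*} [CommRing A] [IsLocalRing A] (I : Ideal A) : Prop :=
  ∃ k : ℕ, maximalIdeal A ^ k ≤ I ∧ I ≤ maximalIdeal A

section AuxFR

variable {A : Type*} [CommRing A]

private lemma prodpow_le_prodpow_FR {s : ℕ} (J : Fin s → Ideal A) {p q : Fin s → ℕ}
    (h : ∀ i, p i ≤ q i) : ∏ i, J i ^ q i ≤ ∏ i, J i ^ p i := by
  classical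
  have key : ∀ (T : Finset (Fin s)), ∏ i ∈ T, J i ^ q i ≤ ∏ i ∈ T, J i ^ p i := by
    intro T
    induction T using Finset.induction with
    | empty => simp
    | insert _ _ hni ih =>
      rw [Finset.prod_insert hni, Finset.prod_insert hni]
      exact mul_le_mul' (Ideal.pow_le_pow_right (h _)) ih
  exact key Finset.univ

private lemma TLe_FR {s : ℕ} (I : Ideal A) (J : Fin s → Ideal A) {a b : ℕ} {p q : Fin s → ℕ}
    (hab : a ≤ b) (hpq : ∀ i, p i ≤ q i) :
    I ^ b * ∏ i, J i ^ q i ≤ I ^ a * ∏ i, J i ^ p i :=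
  mul_le_mul' (Ideal.pow_le_pow_right hab) (prodpow_le_prodpow_FR J hpq)

private lemma mem_TLe_FR {s : ℕ} (I : Ideal A) (J : Fin s → Ideal A) {a b : ℕ}
    {p q : Fin s → ℕ} {y : A} (h : y ∈ I ^ b * ∏ i, J i ^ q i)
    (hab : a ≤ b) (hpq : ∀ i, p i ≤ q i) : y ∈ I ^ a * ∏ i, J i ^ p i :=
  TLe_FR I J hab hpq h

private lemma prodpow_eq_J0_mul_FR {s : ℕ} (J : Fin (s+1) → Ideal A) {v : Fin (s+1) → ℕ}
    (hv0 : 1 ≤ v 0) :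
    (∏ i, J i ^ (v i)) = J 0 * ∏ i, J i ^ (v i - (if i = 0 then 1 else 0)) := by
  classical
  have h1 : ∀ i : Fin (s+1), J i ^ (v i) =
      J i ^ (v i - (if i = 0 then 1 else 0)) * J i ^ (if i = 0 then 1 else 0) := by
    intro i
    rw [← pow_add]
    congr 1
    split_ifs with h
    · subst h; omega
    · omega
  rw [Finset.prod_congr rfl fun i _ => h1 i, Finset.prod_mul_distrib]
  have h2 : ∀ i : Fin (s+1), J i ^ (if i = 0 then 1 else 0) = if i = 0 then J i else 1 := by
    intro i; split_ifs <;> simp only [pow_one, pow_zero]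
  rw [Finset.prod_congr rfl fun i _ => h2 i, Finset.prod_ite_eq']
  simp [mul_comm]

end AuxFR

/-- **Lemma.** Let `x ∈ J_1` whose initial form `x*` in
`S = ⊕ᵤ I^{u_0}J_1^{u_1}⋯J_s^{u_s}/I^{u_0+1}J_1^{u_1+1}⋯J_s^{u_s+1}` satisfies
`(0 : x*)_u = 0` for `u ≫ 0`, i.e.
`(I^{u_0+1}J_1^{u_1+2}J_2^{u_2+1}⋯J_s^{u_s+1} : x) ∩ I^{u_0}J_1^{u_1}⋯J_s^{u_s}
  = I^{u_0+1}J_1^{u_1+1}⋯J_s^{u_s+1}` for `u ≫ 0`.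
Then `I^{u_0}J_1^{u_1}⋯J_s^{u_s} ∩ (x) = x ⬝ I^{u_0}J_1^{u_1-1}J_2^{u_2}⋯J_s^{u_s}`
for `u ≫ 0`.  (The ideals `J_1,…,J_s` are here indexed by `Fin (s+1)`, with `J_1 = J 0`.) -/
theorem intersection_with_principal_of_filter_regular
    {A : Type*} [CommRing A] [IsNoetherianRing A] [IsLocalRing A]
    (I : Ideal A) (hI : IsMPrimary I) {s : ℕ} (J : Fin (s + 1) → Ideal A)
    (x : A) (hx : x ∈ J 0)
    (hxstar : ∃ N : ℕ, ∀ (u0 : ℕ) (v : Fin (s + 1) → ℕ), N ≤ u0 → (∀ i, N ≤ v i) →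
      ((I ^ (u0 + 1) * ∏ i, J i ^ (v i + 1 + (if i = 0 then 1 else 0))).colon
          (Ideal.span {x})) ⊓ (I ^ u0 * ∏ i, J i ^ (v i)) =
        I ^ (u0 + 1) * ∏ i, J i ^ (v i + 1)) :
    ∃ N : ℕ, ∀ (u0 : ℕ) (v : Fin (s + 1) → ℕ), N ≤ u0 → (∀ i, N ≤ v i) →
      (I ^ u0 * ∏ i, J i ^ (v i)) ⊓ Ideal.span {x} =
        Ideal.span {x} * (I ^ u0 * ∏ i, J i ^ (v i - (if i = 0 then 1 else 0))) := by
    classical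
  obtain ⟨N, hN⟩ := hxstar
  obtain ⟨c, hc⟩ := Ideal.exists_pow_inf_eq_pow_smul (M := A)
    (I * ∏ i, J i) (Ideal.span {x})
  refine ⟨N + c + 2, ?_⟩
  intro u0 v hu0 hv
  set t : Fin (s+1) → ℕ := fun i => v i - (if i = 0 then 1 else 0) with ht
  have hv0 : 1 ≤ v 0 := le_trans (by omega) (hv 0)
  have ht0 : t 0 = v 0 - 1 := by simp [ht]
  have htv : ∀ i, t i ≤ v i := fun i => Nat.sub_le _ _
  have htN : ∀ i, N + 1 ≤ t i := by
    intro i; have := hv i; simp only [ht]; split_ifs <;> omega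
  have hKpow : ∀ n : ℕ, (I * ∏ i, J i) ^ n = I ^ n * ∏ i, J i ^ n := by
    intro n; rw [mul_pow, ← Finset.prod_pow]
  have hxspan : Ideal.span {x} ≤ J 0 := Ideal.span_le.mpr (by simpa using hx)
  apply le_antisymm
  · -- hard direction
    intro y hy
    obtain ⟨hyT, hyx⟩ := Submodule.mem_inf.mp hy
    have hyK : y ∈ (I * ∏ i, J i) ^ (N + c + 2) := by
      rw [hKpow]
      exact mem_TLe_FR I J hyT hu0 hv
    have hAR := hc (N + c + 2) (by omega)
    have hymem : y ∈ (I * ∏ i, J i) ^ (N + c + 2 - c) •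
        ((I * ∏ i, J i) ^ c • (⊤ : Ideal A) ⊓ Ideal.span {x}) := by
      rw [← hAR]
      exact Submodule.mem_inf.mpr ⟨by simpa using hyK, hyx⟩
    have hNc : N + c + 2 - c = N + 2 := by omega
    rw [hNc] at hymem
    have hy2 : y ∈ Ideal.span {x} * (I * ∏ i, J i) ^ (N + 2) := by
      have hle := Submodule.smul_mono (le_refl ((I * ∏ i, J i) ^ (N + 2)))
        (inf_le_right (a := (I * ∏ i, J i) ^ c • (⊤ : Ideal A)) (b := Ideal.span {x}))
      have := hle hymem
      rw [smul_eq_mul] at this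
      rwa [mul_comm]
    obtain ⟨b, hbK, hbx⟩ := Ideal.mem_span_singleton_mul.mp hy2
    -- climbing
    have key : ∀ k : ℕ, b ∈ I ^ (min (N + 2 + k) u0) * ∏ i, J i ^ (min (N + 2 + k) (t i)) := by
      intro k
      induction k with
      | zero =>
        have hb2 : b ∈ I ^ (N + 2) * ∏ i, J i ^ (N + 2) := by
          rw [← hKpow]; exact hbK
        exact mem_TLe_FR I J hb2 (by omega) (fun i => by omega)
      | succ k ihk =>
        have h1 : b ∈ I ^ (min (N + 2 + k) (u0 - 1)) *
            ∏ i, J i ^ (min (N + 2 + k) (t i - 1)) :=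
          mem_TLe_FR I J ihk (by omega) (fun i => by omega)
        have h2 : b * x ∈ I ^ (min (N + 2 + k) (u0 - 1) + 1) *
            ∏ i, J i ^ (min (N + 2 + k) (t i - 1) + 1 + (if i = 0 then 1 else 0)) := by
          have hyT2 : y ∈ I ^ (min (N + 2 + k) (u0 - 1) + 1) *
              ∏ i, J i ^ (min (N + 2 + k) (t i - 1) + 1 + (if i = 0 then 1 else 0)) := by
            refine mem_TLe_FR I J hyT (by omega) (fun i => ?_)
            by_cases hi : i = 0
            · subst hi
              simp only [eq_self_iff_true, if_true]
              have h3 := htN 0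
              have h4 := hv 0
              have h5 := ht0
              omega
            · simp only [if_neg hi]
              have h3 := htN i
              have h4 := htv i
              omega
          rwa [mul_comm b x, hbx]
        have h3 := hN (min (N + 2 + k) (u0 - 1)) (fun i => min (N + 2 + k) (t i - 1))
          (by omega) (fun i => by show N ≤ min (N + 2 + k) (t i - 1); have := htN i; omega)
        have h4 : b ∈ I ^ (min (N + 2 + k) (u0 - 1) + 1) *
            ∏ i, J i ^ (min (N + 2 + k) (t i - 1) + 1) := by
          rw [← h3]
          exact Submodule.mem_inf.mpr ⟨Ideal.mem_colon_span_singleton.mpr h2, h1⟩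
        have e1 : min (N + 2 + (k + 1)) u0 = min (N + 2 + k) (u0 - 1) + 1 := by omega
        have e2 : (∏ i, J i ^ (min (N + 2 + (k + 1)) (t i))) =
            ∏ i, J i ^ (min (N + 2 + k) (t i - 1) + 1) := by
          refine Finset.prod_congr rfl fun i _ => ?_
          have := htN i
          congr 1
          omega
        rw [e1, e2]
        exact h4
    have hfin := key (u0 + ∑ i, v i)
    have e1 : min (N + 2 + (u0 + ∑ i, v i)) u0 = u0 := by omega
    have e2 : (∏ i, J i ^ (min (N + 2 + (u0 + ∑ i, v i)) (t i))) = ∏ i, J i ^ (t i) := by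
      refine Finset.prod_congr rfl fun i _ => ?_
      have h5 : v i ≤ ∑ j, v j :=
        Finset.single_le_sum (fun _ _ => Nat.zero_le _) (Finset.mem_univ i)
      have := htv i
      congr 1
      omega
    rw [e1, e2] at hfin
    rw [← hbx]
    exact Ideal.mul_mem_mul (Ideal.mem_span_singleton_self x) hfin
  · -- easy direction
    refine le_inf ?_ Ideal.mul_le_left
    calc Ideal.span {x} * (I ^ u0 * ∏ i, J i ^ (t i))
        ≤ J 0 * (I ^ u0 * ∏ i, J i ^ (t i)) := mul_le_mul' hxspan le_rfl
      _ = I ^ u0 * (J 0 * ∏ i, J i ^ (t i)) := by ring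
      _ = I ^ u0 * ∏ i, J i ^ (v i) := by rw [← prodpow_eq_J0_mul_FR J hv0]
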